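/- For every colorful bin packing instance and every run of BaP on it, the number of bins used by BaP is strictly less than 4·OPT. In other words, the absolute competitive ratio of BaP is at most 4. -/

import Mathlib

/-- A packing of the instance with `n` items, sizes `s` and colors `c` (items are indexed
`1,…,n`) into bins `1,…,L`: each bin has total size at most `1`, and two items packed
consecutively into the same bin have different colors. -/
def IsPacking {γ : Type*} (n L : ℕ) (s : ℕ → ℝ) (c : ℕ → γ) (f : ℕ → ℕ) : Prop :=
  (∀ t, 1 ≤ t → t ≤ n → 1 ≤ f t ∧ f t ≤ L) ∧
  (∀ b, (∑ l ∈ (Finset.Icc 1 n).filter fun l => f l = b, s l) ≤ 1) ∧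
  (∀ i j, 1 ≤ i → i < j → j ≤ n → f i = f j →
    (∀ l, i < l → l < j → f l ≠ f i) → c i ≠ c j)

/-- `OPTcost n s c` is the minimum number of bins over all packings of the instance. -/
noncomputable def OPTcost {γ : Type*} (n : ℕ) (s : ℕ → ℝ) (c : ℕ → γ) : ℕ :=
  sInf {L | ∃ f, IsPacking n L s c f}

/-- A run of the algorithm Balanced-Pseudo (BaP) on an instance of `n` items with colors
`color 1, …, color n`.  `assign t` is the (1-based) index of the pseudo-bin receiving item `t`,
`nbins t` is the number of pseudo-bins after items `1,…,t` have been processed, and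
`bcolor t j` is the color of pseudo-bin `j` after items `1,…,t` have been processed
(the color of the last item assigned to it).  When item `t` arrives, either all existing
pseudo-bins have color `color t` and a new pseudo-bin is opened, or item `t` is assigned to an
existing pseudo-bin whose color `g` differs from `color t` and is such that the number of
pseudo-bins of color `g` is maximal among colors different from `color t` (ties arbitrary). -/
structure BaPRun (n : ℕ) {γ : Type*} [DecidableEq γ] (color : ℕ → γ) where
  assign : ℕ → ℕ
  nbins : ℕ → ℕ
  bcolor : ℕ → ℕ → γ
  nbins_zero : nbins 0 = 0
  step : ∀ t, 1 ≤ t → t ≤ n →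
    (assign t = nbins (t - 1) + 1 ∧ nbins t = nbins (t - 1) + 1 ∧
      ∀ j, 1 ≤ j → j ≤ nbins (t - 1) → bcolor (t - 1) j = color t) ∨
    (1 ≤ assign t ∧ assign t ≤ nbins (t - 1) ∧ nbins t = nbins (t - 1) ∧
      bcolor (t - 1) (assign t) ≠ color t ∧
      ∀ g, g ≠ color t →
        ((Finset.Icc 1 (nbins (t - 1))).filter fun j => bcolor (t - 1) j = g).card ≤
          ((Finset.Icc 1 (nbins (t - 1))).filter fun j =>
            bcolor (t - 1) j = bcolor (t - 1) (assign t)).card)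
  bcolor_step : ∀ t, 1 ≤ t → t ≤ n → ∀ j,
    bcolor t j = if j = assign t then color t else bcolor (t - 1) j

/-- `R.Y m` is the index of the first item assigned to pseudo-bin `m`. -/
noncomputable def BaPRun.Y {n : ℕ} {γ : Type*} [DecidableEq γ] {c : ℕ → γ}
    (R : BaPRun n c) (m : ℕ) : ℕ :=
  sInf {t | 1 ≤ t ∧ t ≤ n ∧ R.assign t = m}

/-- The number of pseudo-bins of color `g` just after items `1,…,t` have been processed. -/
def BaPRun.binsOfColor {n : ℕ} {γ : Type*} [DecidableEq γ] {c : ℕ → γ}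
    (R : BaPRun n c) (t : ℕ) (g : γ) : ℕ :=
  ((Finset.Icc 1 (R.nbins t)).filter fun j => R.bcolor t j = g).card

/-- Number of further bins opened by Next Fit on the list `l` of item sizes when the current
bin already has load `load`. -/
noncomputable def nfExtra : List ℝ → ℝ → ℕ
  | [], _ => 0
  | a :: l, load => if load + a ≤ 1 then nfExtra l (load + a) else 1 + nfExtra l a

/-- Number of bins used by Next Fit on the list `l` of item sizes. -/
noncomputable def nfBins : List ℝ → ℕ
  | [] => 0
  | a :: l => 1 + nfExtra l a

/-- The total number of (actual) bins used by the run `R` of BaP: the items of each pseudo-bin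
are split into bins, in order, by Next Fit. -/
noncomputable def bapCost {n : ℕ} {γ : Type*} [DecidableEq γ] {c : ℕ → γ}
    (s : ℕ → ℝ) (R : BaPRun n c) : ℕ :=
  ∑ j ∈ Finset.Icc 1 (R.nbins n),
    nfBins ((((Finset.Icc 1 n).filter fun t => R.assign t = j).sort (· ≤ ·)).map s)

/-! ### Auxiliary results -/

open Finset

/-- The load of the last bin after Next Fit processes `l` starting with load `load`. -/
noncomputable def nfFinal : List ℝ → ℝ → ℝ
  | [], load => load
  | a :: l, load => if load + a ≤ 1 then nfFinal l (load + a) else nfFinal l a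

lemma nfFinal_nonneg : ∀ (l : List ℝ) (load : ℝ), 0 ≤ load → (∀ x ∈ l, 0 ≤ x) →
    0 ≤ nfFinal l load
  | [], load, h, _ => h
  | a :: l, load, h, hl => by
    have ha : 0 ≤ a := hl a (by simp)
    have hl' : ∀ x ∈ l, 0 ≤ x := fun x hx => hl x (by simp [hx])
    simp only [nfFinal]
    split
    · exact nfFinal_nonneg l _ (by linarith) hl'
    · exact nfFinal_nonneg l _ ha hl'

lemma nfExtra_key : ∀ (l : List ℝ) (load : ℝ), (∀ x ∈ l, 0 ≤ x) →
    (nfExtra l load : ℝ) + nfFinal l load ≤ load + 2 * l.sum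
  | [], load, _ => by simp [nfExtra, nfFinal]
  | a :: l, load, hl => by
    have ha : 0 ≤ a := hl a (by simp)
    have hl' : ∀ x ∈ l, 0 ≤ x := fun x hx => hl x (by simp [hx])
    simp only [nfExtra, nfFinal, List.sum_cons]
    split
    · have := nfExtra_key l (load + a) hl'
      linarith
    · rename_i h
      push_neg at h
      have := nfExtra_key l a hl'
      push_cast
      linarith

lemma nfBins_le (l : List ℝ) (hl : ∀ x ∈ l, 0 ≤ x) : (nfBins l : ℝ) ≤ 1 + 2 * l.sum := by
  cases l with
  | nil => simp [nfBins]
  | cons a l =>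
    have ha : 0 ≤ a := hl a (by simp)
    have hl' : ∀ x ∈ l, 0 ≤ x := fun x hx => hl x (by simp [hx])
    have h1 := nfExtra_key l a hl'
    have h2 := nfFinal_nonneg l a ha hl'
    simp only [nfBins, List.sum_cons]
    push_cast
    linarith

/-- In a finite set of time indices in which any two "adjacent" elements have different
colors, the number of elements of any fixed color exceeds the number of other elements by
at most one (and by at most zero if the maximum does not have the fixed color). -/
lemma alt_count {γ : Type*} [DecidableEq γ] (c : ℕ → γ) (g : γ) :
    ∀ (N : ℕ) (T : Finset ℕ), T.card ≤ N →
    (∀ i ∈ T, ∀ j ∈ T, i < j → (∀ l ∈ T, ¬(i < l ∧ l < j)) → c i ≠ c j) →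
    ((T.filter fun t => c t = g).card ≤ (T.filter fun t => ¬ c t = g).card + 1 ∧
      ((∀ m ∈ T, (∀ x ∈ T, x ≤ m) → ¬ c m = g) →
        (T.filter fun t => c t = g).card ≤ (T.filter fun t => ¬ c t = g).card)) := by
  intro N
  induction N with
  | zero =>
    intro T hcard _
    have : T = ∅ := Finset.card_eq_zero.mp (Nat.le_zero.mp hcard)
    subst this
    simp
  | succ N ih =>
    intro T hcard H
    rcases T.eq_empty_or_nonempty with rfl | hne
    · simp
    · set m := T.max' hne with hm
      have hmT : m ∈ T := T.max'_mem hne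
      set T' := T.erase m with hT'
      have hins : insert m T' = T := insert_erase hmT
      have hmnot : m ∉ T' := notMem_erase _ _
      have hpos : 0 < T.card := card_pos.mpr hne
      have hcard' : T'.card ≤ N := by
        have h1 : T'.card = T.card - 1 := by rw [hT']; exact card_erase_of_mem hmT
        omega
      have H' : ∀ i ∈ T', ∀ j ∈ T', i < j → (∀ l ∈ T', ¬(i < l ∧ l < j)) → c i ≠ c j := by
        intro i hi j hj hij hadj
        refine H i (mem_of_mem_erase hi) j (mem_of_mem_erase hj) hij ?_
        intro l hl hll
        have hjm : j ≤ m := T.le_max' j (mem_of_mem_erase hj)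
        have hlm : l ≠ m := by omega
        exact hadj l (Finset.mem_erase.mpr ⟨hlm, hl⟩) hll
      obtain ⟨ih1, ih2⟩ := ih T' hcard' H'
      by_cases hcm : c m = g
      · have hfe : (T.filter fun t => c t = g) = insert m (T'.filter fun t => c t = g) := by
          rw [← hins, filter_insert, if_pos hcm]
        have hfn : (T.filter fun t => ¬ c t = g) = (T'.filter fun t => ¬ c t = g) := by
          rw [← hins, filter_insert, if_neg (by simp [hcm])]
        have hmnotf : m ∉ (T'.filter fun t => c t = g) :=
          fun h => hmnot (mem_of_mem_filter m h)
        have hkey : (T'.filter fun t => c t = g).card ≤ (T'.filter fun t => ¬ c t = g).card := by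
          apply ih2
          intro m' hm' hmax' hcm'
          have hm'T : m' ∈ T := mem_of_mem_erase hm'
          have hm'm : m' < m := by
            have := T.le_max' m' hm'T
            have : m' ≠ m := (Finset.mem_erase.mp hm').1
            omega
          refine H m' hm'T m hmT hm'm ?_ (by rw [hcm', hcm])
          intro l hl ⟨h1, h2⟩
          have : l ∈ T' := Finset.mem_erase.mpr ⟨by omega, hl⟩
          have : l ≤ m' := hmax' l this
          omega
        constructor
        · rw [hfe, hfn, card_insert_of_notMem hmnotf]
          omega
        · intro hpre
          exact absurd hcm (hpre m hmT (fun x hx => T.le_max' x hx))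
      · have hfe : (T.filter fun t => c t = g) = (T'.filter fun t => c t = g) := by
          rw [← hins, filter_insert, if_neg hcm]
        have hfn : (T.filter fun t => ¬ c t = g) = insert m (T'.filter fun t => ¬ c t = g) := by
          rw [← hins, filter_insert, if_pos hcm]
        have hmnotf : m ∉ (T'.filter fun t => ¬ c t = g) :=
          fun h => hmnot (mem_of_mem_filter m h)
        rw [hfe, hfn, card_insert_of_notMem hmnotf]
        exact ⟨by omega, fun _ => by omega⟩

/-- In any packing into `L` bins, within any time window, the number of items of a fixed
color exceeds the number of other items by at most `L`. -/
lemma window_disc {γ : Type*} [DecidableEq γ] {n L : ℕ} {s : ℕ → ℝ} {c : ℕ → γ} {f : ℕ → ℕ}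
    (hf : IsPacking n L s c f) (g : γ) (a b : ℕ) (ha : 1 ≤ a) (hb : b ≤ n) :
    ((Finset.Icc a b).filter fun t => c t = g).card ≤
      ((Finset.Icc a b).filter fun t => ¬ c t = g).card + L := by
  have hmaps : ∀ p : ℕ → Prop, ∀ [DecidablePred p],
      ∀ x ∈ (Finset.Icc a b).filter fun t => p t, f x ∈ Finset.Icc 1 L := by
    intro p _ x hx
    have hx' := mem_of_mem_filter x hx
    rw [mem_Icc] at hx' ⊢
    exact hf.1 x (by omega) (by omega)
  rw [Finset.card_eq_sum_card_fiberwise (f := f) (t := Finset.Icc 1 L) (hmaps _),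
      Finset.card_eq_sum_card_fiberwise (f := f) (t := Finset.Icc 1 L) (hmaps _)]
  have hpt : ∀ β ∈ Finset.Icc 1 L,
      (((Finset.Icc a b).filter fun t => c t = g).filter fun t => f t = β).card ≤
      (((Finset.Icc a b).filter fun t => ¬ c t = g).filter fun t => f t = β).card + 1 := by
    intro β _
    rw [filter_comm, filter_comm (fun t => ¬ c t = g)]
    set T := (Finset.Icc a b).filter fun t => f t = β with hT
    have H : ∀ i ∈ T, ∀ j ∈ T, i < j → (∀ l ∈ T, ¬(i < l ∧ l < j)) → c i ≠ c j := by
      intro i hi j hj hij hadj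
      have hi' := mem_filter.mp hi
      have hj' := mem_filter.mp hj
      rw [mem_Icc] at hi' hj'
      refine hf.2.2 i j (by omega) hij (by omega) (by rw [hi'.2, hj'.2]) ?_
      intro l hl1 hl2 hfl
      refine hadj l ?_ ⟨hl1, hl2⟩
      rw [hT, mem_filter, mem_Icc]
      exact ⟨⟨by omega, by omega⟩, by rw [hfl, hi'.2]⟩
    exact (alt_count c g T.card T le_rfl H).1
  calc ∑ β ∈ Finset.Icc 1 L,
        (((Finset.Icc a b).filter fun t => c t = g).filter fun t => f t = β).card
      ≤ ∑ β ∈ Finset.Icc 1 L,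
        ((((Finset.Icc a b).filter fun t => ¬ c t = g).filter fun t => f t = β).card + 1) :=
        Finset.sum_le_sum hpt
    _ = (∑ β ∈ Finset.Icc 1 L,
        (((Finset.Icc a b).filter fun t => ¬ c t = g).filter fun t => f t = β).card) + L := by
        rw [Finset.sum_add_distrib, Finset.sum_const, Nat.card_Icc]
        simp

namespace BaPRun
variable {γ : Type*} [DecidableEq γ] {n : ℕ} {c : ℕ → γ} (R : BaPRun n c)

lemma boc_zero (g : γ) : R.binsOfColor 0 g = 0 := by
  unfold binsOfColor
  rw [R.nbins_zero]
  simp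

lemma nbins_succ {t : ℕ} (h1 : 1 ≤ t) (h2 : t ≤ n) :
    R.nbins t = R.nbins (t - 1) ∨ R.nbins t = R.nbins (t - 1) + 1 := by
  rcases R.step t h1 h2 with h | h
  · exact Or.inr h.2.1
  · exact Or.inl h.2.2.1

lemma nbins_mono : ∀ (u d : ℕ), u + d ≤ n → R.nbins u ≤ R.nbins (u + d) := by
  intro u d
  induction d with
  | zero => simp
  | succ d ih =>
    intro h
    show R.nbins u ≤ R.nbins (u + d + 1)
    have h1 := ih (by omega)
    have h2 := R.nbins_succ (t := u + d + 1) (by omega) (by omega)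
    have : u + d + 1 - 1 = u + d := by omega
    rw [this] at h2
    omega

lemma assign_mem {t : ℕ} (h1 : 1 ≤ t) (h2 : t ≤ n) :
    1 ≤ R.assign t ∧ R.assign t ≤ R.nbins t := by
  rcases R.step t h1 h2 with h | h
  · rw [h.1, h.2.1]; omega
  · rw [h.2.2.1]; exact ⟨h.1, h.2.1⟩

lemma open_spec {t : ℕ} (h1 : 1 ≤ t) (h2 : t ≤ n)
    (hop : R.nbins t = R.nbins (t - 1) + 1) :
    R.assign t = R.nbins (t - 1) + 1 ∧
    (∀ j, 1 ≤ j → j ≤ R.nbins (t - 1) → R.bcolor (t - 1) j = c t) := by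
  rcases R.step t h1 h2 with h | h
  · exact ⟨h.1, h.2.2⟩
  · exfalso; have := h.2.2.1; omega

lemma assign_spec {t : ℕ} (h1 : 1 ≤ t) (h2 : t ≤ n)
    (hna : R.nbins t = R.nbins (t - 1)) :
    1 ≤ R.assign t ∧ R.assign t ≤ R.nbins (t - 1) ∧
      R.bcolor (t - 1) (R.assign t) ≠ c t ∧
      ∀ g, g ≠ c t →
        ((Finset.Icc 1 (R.nbins (t - 1))).filter fun j => R.bcolor (t - 1) j = g).card ≤
          ((Finset.Icc 1 (R.nbins (t - 1))).filter fun j =>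
            R.bcolor (t - 1) j = R.bcolor (t - 1) (R.assign t)).card := by
  rcases R.step t h1 h2 with h | h
  · exfalso; have := h.2.1; omega
  · exact ⟨h.1, h.2.1, h.2.2.2.1, h.2.2.2.2⟩

lemma boc_le (t : ℕ) (g : γ) : R.binsOfColor t g ≤ R.nbins t := by
  unfold binsOfColor
  calc _ ≤ (Finset.Icc 1 (R.nbins t)).card := card_filter_le _ _
    _ = R.nbins t := by rw [Nat.card_Icc]; omega

lemma boc_add_le (t : ℕ) {g g' : γ} (hgg : g ≠ g') :
    R.binsOfColor t g + R.binsOfColor t g' ≤ R.nbins t := by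
  unfold binsOfColor
  have hd : Disjoint ((Finset.Icc 1 (R.nbins t)).filter fun j => R.bcolor t j = g)
      ((Finset.Icc 1 (R.nbins t)).filter fun j => R.bcolor t j = g') := by
    rw [Finset.disjoint_left]
    intro x hx1 hx2
    exact hgg ((mem_filter.mp hx1).2.symm.trans (mem_filter.mp hx2).2)
  calc _ = (((Finset.Icc 1 (R.nbins t)).filter fun j => R.bcolor t j = g) ∪
        ((Finset.Icc 1 (R.nbins t)).filter fun j => R.bcolor t j = g')).card :=
      (card_union_of_disjoint hd).symm
    _ ≤ (Finset.Icc 1 (R.nbins t)).card := card_le_card (by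
        apply Finset.union_subset <;> exact filter_subset _ _)
    _ = R.nbins t := by rw [Nat.card_Icc]; omega

/-- In the opening case, all bins (before and after step `t`) have color `c t`.  -/
lemma boc_open {t : ℕ} (h1 : 1 ≤ t) (h2 : t ≤ n)
    (hop : R.nbins t = R.nbins (t - 1) + 1) :
    R.binsOfColor t (c t) = R.nbins t ∧
    R.binsOfColor (t - 1) (c t) = R.nbins (t - 1) ∧
    (∀ g, g ≠ c t → R.binsOfColor t g = 0) ∧
    (∀ g, g ≠ c t → R.binsOfColor (t - 1) g = 0) := by
  obtain ⟨hasg, hall⟩ := R.open_spec h1 h2 hop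
  have hallt : ∀ j, 1 ≤ j → j ≤ R.nbins t → R.bcolor t j = c t := by
    intro j hj1 hj2
    rw [R.bcolor_step t h1 h2 j]
    by_cases hja : j = R.assign t
    · rw [if_pos hja]
    · rw [if_neg hja]
      exact hall j hj1 (by omega)
  have e1 : R.binsOfColor t (c t) = R.nbins t := by
    unfold binsOfColor
    rw [Finset.filter_true_of_mem, Nat.card_Icc]
    · omega
    · intro j hj; rw [mem_Icc] at hj; exact hallt j hj.1 hj.2
  have e2 : R.binsOfColor (t - 1) (c t) = R.nbins (t - 1) := by
    unfold binsOfColor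
    rw [Finset.filter_true_of_mem, Nat.card_Icc]
    · omega
    · intro j hj; rw [mem_Icc] at hj; exact hall j hj.1 hj.2
  refine ⟨e1, e2, fun g hg => ?_, fun g hg => ?_⟩
  · unfold binsOfColor
    rw [Finset.filter_false_of_mem, card_empty]
    intro j hj; rw [mem_Icc] at hj
    rw [hallt j hj.1 hj.2]
    exact fun h => hg h.symm
  · unfold binsOfColor
    rw [Finset.filter_false_of_mem, card_empty]
    intro j hj; rw [mem_Icc] at hj
    rw [hall j hj.1 hj.2]
    exact fun h => hg h.symm

/-- In the assignment case: the count of color `c t` goes up by one, the count of the old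
color of the receiving bin goes down by one, and all other counts are unchanged. -/
lemma boc_assign {t : ℕ} (h1 : 1 ≤ t) (h2 : t ≤ n)
    (hna : R.nbins t = R.nbins (t - 1)) :
    R.binsOfColor t (c t) = R.binsOfColor (t - 1) (c t) + 1 ∧
    R.binsOfColor t (R.bcolor (t - 1) (R.assign t)) + 1
      = R.binsOfColor (t - 1) (R.bcolor (t - 1) (R.assign t)) ∧
    (∀ g, g ≠ c t → g ≠ R.bcolor (t - 1) (R.assign t) →
      R.binsOfColor t g = R.binsOfColor (t - 1) g) := by
  obtain ⟨ha1, ha2, hg0, _⟩ := R.assign_spec h1 h2 hna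
  set a := R.assign t with ha
  set g0 := R.bcolor (t - 1) a with hg0def
  have hamem : a ∈ Finset.Icc 1 (R.nbins (t - 1)) := mem_Icc.mpr ⟨ha1, ha2⟩
  have hbc : ∀ j, R.bcolor t j = if j = a then c t else R.bcolor (t - 1) j :=
    R.bcolor_step t h1 h2
  refine ⟨?_, ?_, ?_⟩
  · unfold binsOfColor
    rw [hna]
    have hset : ((Finset.Icc 1 (R.nbins (t - 1))).filter fun j => R.bcolor t j = c t)
        = insert a ((Finset.Icc 1 (R.nbins (t - 1))).filter
            fun j => R.bcolor (t-1) j = c t) := by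
      ext j
      rw [mem_insert, mem_filter, mem_filter, hbc j]
      by_cases hj : j = a
      · subst hj; simp [hamem]
      · simp [hj]
    rw [hset, card_insert_of_notMem]
    intro hmem
    exact hg0 (mem_filter.mp hmem).2
  · unfold binsOfColor
    rw [hna]
    have hset : ((Finset.Icc 1 (R.nbins (t - 1))).filter fun j => R.bcolor (t-1) j = g0)
        = insert a ((Finset.Icc 1 (R.nbins (t - 1))).filter fun j => R.bcolor t j = g0) := by
      ext j
      rw [mem_insert, mem_filter, mem_filter, hbc j]
      by_cases hj : j = a
      · subst hj; simp [hamem, hg0def]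
      · simp [hj]
    rw [hset, card_insert_of_notMem]
    · intro hmem
      have := (mem_filter.mp hmem).2
      rw [hbc a, if_pos rfl] at this
      exact hg0 this.symm
  · intro g hgc hgg0
    unfold binsOfColor
    rw [hna]
    congr 1
    apply filter_congr
    intro j hj
    rw [hbc j]
    by_cases hja2 : j = a
    · subst hja2
      simp only [if_pos rfl]
      constructor
      · intro h; exact absurd h.symm hgc
      · intro h; exact absurd h.symm hgg0
    · rw [if_neg hja2]

/-- The central invariant: between the last time `τ` at which the potential
`2·(count of color c T) − (number of pseudo-bins)` was nonpositive and the opening time `T`,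
the potential is controlled by the color counts of the arriving items. -/
lemma key (R : BaPRun n c) {τ T : ℕ} (hτT : τ < T) (hTn : T ≤ n)
    (hTop : R.nbins T = R.nbins (T - 1) + 1)
    (hDτ : 2 * (R.binsOfColor τ (c T) : ℤ) - R.nbins τ ≤ 0)
    (hmid : ∀ v, τ < v → v < T → 1 ≤ 2 * (R.binsOfColor v (c T) : ℤ) - R.nbins v) :
    ∀ d, τ + d ≤ T →
      2 * (R.binsOfColor (τ + d) (c T) : ℤ) - R.nbins (τ + d) ≤
        2 * ((((Finset.Icc (τ+1) (τ+d)).filter fun t => c t = c T).card : ℤ)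
          - (((Finset.Icc (τ+1) (τ+d)).filter fun t => ¬ c t = c T).card : ℤ))
        - (((Finset.Icc (τ+1) (τ+d)).filter
            fun t => R.nbins t = R.nbins (t-1) + 1).card : ℤ) := by
  intro d
  induction d with
  | zero =>
    intro _
    have hempty : Finset.Icc (τ+1) (τ+0) = ∅ := by
      apply Finset.Icc_eq_empty
      omega
    rw [hempty]
    simpa using hDτ
  | succ d ih =>
    intro hdT
    simp only [show τ + (d+1) = τ + d + 1 from rfl] at *
    set u := τ + d + 1 with hu
    have ih' := ih (by omega)
    have hu1 : 1 ≤ u := by omega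
    have hun : u ≤ n := by omega
    have hum : u - 1 = τ + d := by omega
    have hins : Finset.Icc (τ+1) u = insert u (Finset.Icc (τ+1) (τ+d)) := by
      ext x
      rw [Finset.mem_insert, Finset.mem_Icc, Finset.mem_Icc]
      omega
    have hnotmem : u ∉ Finset.Icc (τ+1) (τ+d) := by
      rw [Finset.mem_Icc]; omega
    have cardgen : ∀ (p : ℕ → Prop) [DecidablePred p],
        (((Finset.Icc (τ+1) u).filter fun t => p t).card : ℤ)
          = (((Finset.Icc (τ+1) (τ+d)).filter fun t => p t).card : ℤ)
            + (if p u then 1 else 0) := by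
      intro p _
      rw [hins, filter_insert]
      split
      · rw [card_insert_of_notMem (fun hcon => hnotmem (mem_of_mem_filter u hcon))]
        push_cast; ring
      · simp
    rw [cardgen, cardgen, cardgen]
    rcases R.step u hu1 hun with hopb | hasb
    · -- opening step
      have hopeq : R.nbins u = R.nbins (u - 1) + 1 := hopb.2.1
      obtain ⟨e1, e2, e3, e4⟩ := R.boc_open hu1 hun hopeq
      by_cases hcu : c u = c T
      · have v1 : R.binsOfColor u (c T) = R.nbins u := hcu ▸ e1
        have v2 : R.binsOfColor (u-1) (c T) = R.nbins (u-1) := hcu ▸ e2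
        rw [if_pos hcu, if_neg (fun hcon => hcon hcu), if_pos hopeq]
        rw [hum] at v2
        have hopeq' := hopeq
        rw [hum] at hopeq'
        omega
      · exfalso
        have hz : R.binsOfColor u (c T) = 0 := e3 (c T) (fun hcon => hcu hcon.symm)
        by_cases huT : u = T
        · rw [huT] at hcu; exact hcu rfl
        · have hm := hmid u (by omega) (by omega)
          rw [hz] at hm
          omega
    · -- assignment step
      have hnaeq : R.nbins u = R.nbins (u - 1) := hasb.2.2.1
      have hnP : ¬ (R.nbins u = R.nbins (u - 1) + 1) := by omega
      obtain ⟨b1, b2, b3⟩ := R.boc_assign hu1 hun hnaeq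
      have hg0 : R.bcolor (u-1) (R.assign u) ≠ c u := hasb.2.2.2.1
      have hnaeq' := hnaeq
      rw [hum] at hnaeq'
      have huT : u ≠ T := by
        intro hcon
        rw [hcon] at hnaeq
        omega
      by_cases hcu : c u = c T
      · have v1 : R.binsOfColor u (c T) = R.binsOfColor (u-1) (c T) + 1 := hcu ▸ b1
        rw [hum] at v1
        rw [if_pos hcu, if_neg (fun hcon => hcon hcu), if_neg hnP]
        omega
      · by_cases hg0cc : R.bcolor (u-1) (R.assign u) = c T
        · have v1 : R.binsOfColor u (c T) + 1 = R.binsOfColor (u-1) (c T) := by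
            rw [← hg0cc]; exact b2
          rw [hum] at v1
          rw [if_neg hcu, if_pos (fun hcon => hcu hcon), if_neg hnP]
          omega
        · exfalso
          have hm := hmid u (by omega) (by omega)
          by_cases hd0 : d = 0
          · have v1 : R.binsOfColor u (c T) = R.binsOfColor (u-1) (c T) :=
              b3 (c T) (fun hcon => hcu hcon.symm) (fun hcon => hg0cc hcon.symm)
            have hDτ' := hDτ
            rw [show τ = u - 1 by omega] at hDτ'
            omega
          · have hDu1 := hmid (u-1) (by omega) (by omega)
            have hmax : R.binsOfColor (u-1) (c T) ≤
                R.binsOfColor (u-1) (R.bcolor (u-1) (R.assign u)) :=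
              (R.assign_spec hu1 hun hnaeq).2.2.2 (c T) (fun hcon => hcu hcon.symm)
            have hsum := R.boc_add_le (u-1)
              (show c T ≠ R.bcolor (u-1) (R.assign u) from fun hcon => hg0cc hcon.symm)
            omega

end BaPRun


/-- on every (nonempty) colorful bin packing instance, every run of BaP uses
strictly fewer than `4·OPT` bins: the absolute competitive ratio of BaP is at most `4`. -/
theorem bap_lt_four_OPT {γ : Type*} [DecidableEq γ] (n : ℕ) (hn : 1 ≤ n)
    (s : ℕ → ℝ) (c : ℕ → γ) (hs : ∀ t, 1 ≤ t → t ≤ n → s t ∈ Set.Icc (0 : ℝ) 1)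
    (R : BaPRun n c) :
    bapCost s R < 4 * OPTcost n s c := by
  classical
  -- An optimal packing exists.
  have hid : IsPacking n n s c id := by
    refine ⟨fun t h1 h2 => ⟨h1, h2⟩, ?_, ?_⟩
    · intro b
      by_cases hb : 1 ≤ b ∧ b ≤ n
      · have hsing : ((Finset.Icc 1 n).filter fun l => id l = b) = {b} := by
          ext x
          simp only [Finset.mem_filter, Finset.mem_Icc, id_eq, Finset.mem_singleton]
          constructor
          · exact fun h => h.2
          · rintro rfl; exact ⟨hb, rfl⟩
        rw [hsing, Finset.sum_singleton]
        exact (hs b hb.1 hb.2).2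
      · have hemp : ((Finset.Icc 1 n).filter fun l => id l = b) = ∅ := by
          ext x
          simp only [Finset.mem_filter, Finset.mem_Icc, id_eq, Finset.notMem_empty, iff_false]
          rintro ⟨hx, rfl⟩
          exact hb hx
        rw [hemp]
        norm_num
    · intro i j h1 hij hj hfij _
      exfalso
      simp only [id_eq] at hfij
      omega
  have hPne : {L | ∃ f, IsPacking n L s c f}.Nonempty := ⟨n, id, hid⟩
  obtain ⟨f, hf⟩ : ∃ f, IsPacking n (OPTcost n s c) s c f := Nat.sInf_mem hPne
  set L := OPTcost n s c with hLdef
  -- total size is at most L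
  have hS : (∑ t ∈ Finset.Icc 1 n, s t) ≤ (L : ℝ) := by
    rw [← Finset.sum_fiberwise_of_maps_to (g := f) (t := Finset.Icc 1 L) (fun x hx => by
      rw [Finset.mem_Icc] at hx ⊢
      exact hf.1 x hx.1 hx.2) s]
    calc ∑ b ∈ Finset.Icc 1 L, ∑ x ∈ (Finset.Icc 1 n).filter (fun i => f i = b), s x
        ≤ ∑ b ∈ Finset.Icc 1 L, 1 := Finset.sum_le_sum (fun b _ => hf.2.1 b)
      _ = (L : ℝ) := by rw [Finset.sum_const, Nat.card_Icc]; simp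
  -- the last opening time T
  have hstep1 : R.nbins 1 = R.nbins (1 - 1) + 1 := by
    rcases R.step 1 le_rfl hn with h | h
    · exact h.2.1
    · exfalso
      have h1 := h.1
      have h2 := h.2.1
      have h0 : R.nbins (1 - 1) = 0 := R.nbins_zero
      omega
  set Op := (Finset.Icc 1 n).filter (fun u => R.nbins u = R.nbins (u-1) + 1) with hOp
  have hOpne : Op.Nonempty := by
    refine ⟨1, ?_⟩
    rw [hOp, Finset.mem_filter, Finset.mem_Icc]
    exact ⟨⟨le_rfl, hn⟩, hstep1⟩
  set T := Op.max' hOpne with hTdef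
  have hTmem : T ∈ Op := Op.max'_mem hOpne
  rw [hOp, Finset.mem_filter, Finset.mem_Icc] at hTmem
  obtain ⟨⟨hT1, hTn⟩, hTop⟩ := hTmem
  have hafter : ∀ d, T + d ≤ n → R.nbins (T + d) = R.nbins T := by
    intro d
    induction d with
    | zero => intro _; rfl
    | succ d ih =>
      intro h
      show R.nbins (T + d + 1) = R.nbins T
      have hnm : T + d + 1 ∉ Op := by
        intro hmem
        have hle := Op.le_max' _ hmem
        rw [← hTdef] at hle
        omega
      rcases R.step (T+d+1) (by omega) (by omega) with h' | h'
      · exfalso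
        apply hnm
        rw [hOp, Finset.mem_filter, Finset.mem_Icc]
        exact ⟨⟨by omega, by omega⟩, h'.2.1⟩
      · have heq := h'.2.2.1
        have hs1 : T + d + 1 - 1 = T + d := by omega
        rw [hs1] at heq
        rw [heq]
        exact ih (by omega)
  have hqT : R.nbins n = R.nbins T := by
    have h := hafter (n - T) (by omega)
    rw [show T + (n - T) = n by omega] at h
    exact h
  -- the last time τ < T at which the potential is nonpositive
  set Ta := (Finset.range T).filter
      (fun v => 2 * (R.binsOfColor v (c T) : ℤ) - R.nbins v ≤ 0) with hTa
  have hTane : Ta.Nonempty := by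
    refine ⟨0, ?_⟩
    rw [hTa, Finset.mem_filter, Finset.mem_range]
    refine ⟨by omega, ?_⟩
    rw [R.boc_zero, R.nbins_zero]
    simp
  set τ := Ta.max' hTane with hτdef
  have hτmem : τ ∈ Ta := Ta.max'_mem hTane
  rw [hTa, Finset.mem_filter, Finset.mem_range] at hτmem
  obtain ⟨hτT, hDτ⟩ := hτmem
  have hmid : ∀ v, τ < v → v < T → 1 ≤ 2 * (R.binsOfColor v (c T) : ℤ) - R.nbins v := by
    intro v hv1 hv2
    by_contra hcon
    push_neg at hcon
    have hvmem : v ∈ Ta := by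
      rw [hTa, Finset.mem_filter, Finset.mem_range]
      exact ⟨hv2, by omega⟩
    have hle := Ta.le_max' v hvmem
    rw [← hτdef] at hle
    omega
  have hkey := R.key hτT hTn hTop hDτ hmid (T - τ) (by omega)
  rw [show τ + (T - τ) = T by omega] at hkey
  have hDT : R.binsOfColor T (c T) = R.nbins T := (R.boc_open hT1 hTn hTop).1
  have hPT : 1 ≤ ((Finset.Icc (τ+1) T).filter
      fun t => R.nbins t = R.nbins (t-1) + 1).card :=
    Finset.card_pos.mpr ⟨T, Finset.mem_filter.mpr
      ⟨Finset.mem_Icc.mpr ⟨by omega, le_rfl⟩, hTop⟩⟩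
  have hAB := window_disc hf (c T) (τ+1) T (by omega) hTn
  -- the number of pseudo-bins is at most 2L - 1
  have hq2L : (R.nbins n : ℤ) ≤ 2 * (L:ℤ) - 1 := by
    rw [hqT]
    omega
  -- the cost bound
  have hfibsum : ∀ j : ℕ,
      (((((Finset.Icc 1 n).filter fun t => R.assign t = j).sort (· ≤ ·)).map s).sum)
      = ∑ t ∈ (Finset.Icc 1 n).filter (fun t => R.assign t = j), s t := by
    intro j
    rw [← Finset.sum_map_toList]
    exact List.Perm.sum_eq (List.Perm.map s (Finset.sort_perm_toList _ _))
  have hnonneg : ∀ j : ℕ, ∀ x ∈ ((((Finset.Icc 1 n).filter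
      fun t => R.assign t = j).sort (· ≤ ·)).map s), 0 ≤ x := by
    intro j x hx
    rw [List.mem_map] at hx
    obtain ⟨t, ht, rfl⟩ := hx
    rw [Finset.mem_sort] at ht
    have hmem := Finset.mem_of_mem_filter t ht
    rw [Finset.mem_Icc] at hmem
    exact (hs t hmem.1 hmem.2).1
  have hassignmem : ∀ t ∈ Finset.Icc 1 n, R.assign t ∈ Finset.Icc 1 (R.nbins n) := by
    intro t ht
    rw [Finset.mem_Icc] at ht ⊢
    obtain ⟨h1, h2⟩ := R.assign_mem ht.1 ht.2
    have hmono := R.nbins_mono t (n - t) (by omega)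
    rw [show t + (n - t) = n by omega] at hmono
    exact ⟨h1, by omega⟩
  have hsfib : ∑ j ∈ Finset.Icc 1 (R.nbins n),
      ∑ t ∈ (Finset.Icc 1 n).filter (fun t => R.assign t = j), s t
      = ∑ t ∈ Finset.Icc 1 n, s t :=
    Finset.sum_fiberwise_of_maps_to hassignmem s
  have hcost : (bapCost s R : ℝ) ≤ (R.nbins n : ℝ) + 2 * ∑ t ∈ Finset.Icc 1 n, s t := by
    unfold bapCost
    push_cast
    calc ∑ j ∈ Finset.Icc 1 (R.nbins n),
          (nfBins ((((Finset.Icc 1 n).filter fun t => R.assign t = j).sort (· ≤ ·)).map s) : ℝ)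
        ≤ ∑ j ∈ Finset.Icc 1 (R.nbins n),
          (1 + 2 * (((((Finset.Icc 1 n).filter
            fun t => R.assign t = j).sort (· ≤ ·)).map s).sum)) :=
          Finset.sum_le_sum (fun j _ => nfBins_le _ (hnonneg j))
      _ = (R.nbins n : ℝ) + 2 * ∑ t ∈ Finset.Icc 1 n, s t := by
          rw [Finset.sum_add_distrib, Finset.sum_const, Nat.card_Icc, ← Finset.mul_sum]
          simp only [hfibsum]
          rw [hsfib]
          simp
  -- conclusion
  have hq2L' : (R.nbins n : ℝ) ≤ 2 * (L:ℝ) - 1 := by exact_mod_cast hq2L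
  have hfin : (bapCost s R : ℝ) < ((4 * L : ℕ) : ℝ) := by
    push_cast
    linarith
  exact_mod_cast hfin
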